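/- In a Gaussian DAG model, if σ is consistent with the true DAG G* (i.e., all edges of G* go forward in σ), then for every node j the conditional variance of X_j given all predecessors under σ equals the conditional variance of X_j given its parents in G*: Var(X_j | X_{PRED_j(σ)}) = Var(X_j | X_{PA_j(G*)}). -/

import Mathlib

open Matrix BigOperators

/-- Conditional variance of coordinate `j` of a centered Gaussian vector with covariance `S`,
given the coordinates in the index set `A`, i.e. the Schur complement
`S j j - S_{jA} (S_{AA})⁻¹ S_{Aj}`. -/
noncomputable def condVar {p : ℕ} (S : Matrix (Fin p) (Fin p) ℝ) (j : Fin p)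
    (A : Finset (Fin p)) : ℝ :=
  S j j - ∑ s : A, ∑ t : A,
    S j s.1 * (Matrix.of fun a b : A => S a.1 b.1)⁻¹ s t * S t.1 j

/-- The set of predecessors of node `j` under the ordering `σ`. -/
def PRED {p : ℕ} (σ : Equiv.Perm (Fin p)) (j : Fin p) : Finset (Fin p) :=
  Finset.univ.filter fun i => σ.symm i < σ.symm j

/-- `σ` is consistent with the DAG encoded by the weighted adjacency matrix `B`:
every edge `i → j` (i.e. `B i j ≠ 0`) goes forward in the ordering `σ`. -/
def Consistent {p : ℕ} (B : Matrix (Fin p) (Fin p) ℝ) (σ : Equiv.Perm (Fin p)) : Prop :=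
  ∀ i j, B i j ≠ 0 → σ.symm i < σ.symm j

/-- The covariance matrix `Σ = (I - Bᵀ)⁻¹ Ω (I - B)⁻¹` of the Gaussian linear SEM
`X = Bᵀ X + ε`, `ε ~ N(0, Ω)` with `Ω = diag ω`. -/
noncomputable def modelCov {p : ℕ} (B : Matrix (Fin p) (Fin p) ℝ) (ω : Fin p → ℝ) :
    Matrix (Fin p) (Fin p) ℝ :=
  (1 - B.transpose)⁻¹ * Matrix.diagonal ω * (1 - B)⁻¹

/-- The parent set of node `j` in the DAG encoded by `B`. -/
noncomputable def PA {p : ℕ} (B : Matrix (Fin p) (Fin p) ℝ) (j : Fin p) : Finset (Fin p) :=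
  Finset.univ.filter fun i => B i j ≠ 0

section AuxTri


variable {p : ℕ} (B : Matrix (Fin p) (Fin p) ℝ) (σ : Equiv.Perm (Fin p))

/-- Support of powers of a consistent adjacency matrix. -/
lemma pow_support (hσ : ∀ i j, B i j ≠ 0 → σ.symm i < σ.symm j) :
    ∀ k a b, (B ^ k) a b ≠ 0 → k = 0 ∨ (σ.symm a : ℕ) + k ≤ (σ.symm b : ℕ) := by
  intro k
  induction k with
  | zero => intro a b _; exact Or.inl rfl
  | succ k ih =>
    intro a b hab
    right
    rw [pow_succ', Matrix.mul_apply] at hab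
    obtain ⟨c, -, hc⟩ := Finset.exists_ne_zero_of_sum_ne_zero hab
    have h1 : B a c ≠ 0 := fun h => hc (by simp [h])
    have h2 : (B ^ k) c b ≠ 0 := fun h => hc (by simp [h])
    have hac : σ.symm a < σ.symm c := hσ _ _ h1
    rcases ih c b h2 with h | h
    · subst h
      have : c = b := by
        by_contra hne
        exact h2 (by simp [Matrix.one_apply_ne hne])
      subst this
      omega
    · omega

lemma pow_p_eq_zero (hσ : ∀ i j, B i j ≠ 0 → σ.symm i < σ.symm j) : B ^ p = 0 := by
  ext a b
  by_contra h
  rcases pow_support B σ hσ p a b h with h' | h'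
  · exact absurd (Fin.pos a) (by omega)
  · have := (σ.symm b).isLt
    omega

lemma one_sub_mul_geom (hσ : ∀ i j, B i j ≠ 0 → σ.symm i < σ.symm j) :
    (1 - B) * (∑ i ∈ Finset.range p, B ^ i) = 1 := by
  have := mul_geom_sum B p
  rw [pow_p_eq_zero B σ hσ] at this
  have h2 : (1 - B) * (∑ i ∈ Finset.range p, B ^ i)
      = -((B - 1) * ∑ i ∈ Finset.range p, B ^ i) := by noncomm_ring
  rw [h2, this]; noncomm_ring

lemma geom_mul_one_sub (hσ : ∀ i j, B i j ≠ 0 → σ.symm i < σ.symm j) :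
    (∑ i ∈ Finset.range p, B ^ i) * (1 - B) = 1 := by
  have := geom_sum_mul B p
  rw [pow_p_eq_zero B σ hσ] at this
  have h2 : (∑ i ∈ Finset.range p, B ^ i) * (1 - B)
      = -((∑ i ∈ Finset.range p, B ^ i) * (B - 1)) := by noncomm_ring
  rw [h2, this]; noncomm_ring

lemma inv_one_sub_eq (hσ : ∀ i j, B i j ≠ 0 → σ.symm i < σ.symm j) :
    (1 - B)⁻¹ = ∑ i ∈ Finset.range p, B ^ i :=
  Matrix.inv_eq_right_inv (one_sub_mul_geom B σ hσ)

lemma inv_mul_one_sub (hσ : ∀ i j, B i j ≠ 0 → σ.symm i < σ.symm j) :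
    (1 - B)⁻¹ * (1 - B) = 1 := by
  rw [inv_one_sub_eq B σ hσ]; exact geom_mul_one_sub B σ hσ

lemma one_sub_mul_inv (hσ : ∀ i j, B i j ≠ 0 → σ.symm i < σ.symm j) :
    (1 - B) * (1 - B)⁻¹ = 1 := by
  rw [inv_one_sub_eq B σ hσ]; exact one_sub_mul_geom B σ hσ

/-- Entries of the inverse on or below the "diagonal" w.r.t. the ordering. -/
lemma inv_entry (hσ : ∀ i j, B i j ≠ 0 → σ.symm i < σ.symm j) {a b : Fin p}
    (h : σ.symm b ≤ σ.symm a) :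
    (1 - B)⁻¹ a b = if a = b then 1 else 0 := by
  rw [inv_one_sub_eq B σ hσ]
  rw [Matrix.sum_apply]
  rw [Finset.sum_eq_single 0]
  · simp [Matrix.one_apply]
  · intro k _ hk
    by_contra hkab
    rcases pow_support B σ hσ k a b hkab with h' | h'
    · exact hk h'
    · have hb := (σ.symm b : ℕ); omega
  · intro h0
    simp only [Finset.mem_range, not_lt, Nat.le_zero] at h0
    exact absurd (Fin.pos a) (by omega)


end AuxTri

section Cov

variable {p : ℕ} (B : Matrix (Fin p) (Fin p) ℝ) (ω : Fin p → ℝ) (σ : Equiv.Perm (Fin p))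

lemma modelCov_eq (hσ : Consistent B σ) :
    modelCov B ω = ((1 - B)⁻¹)ᵀ * Matrix.diagonal ω * (1 - B)⁻¹ := by
  rw [modelCov, Matrix.transpose_nonsing_inv]
  congr 2
  rw [Matrix.transpose_sub, Matrix.transpose_one]

lemma modelCov_symm (hσ : Consistent B σ) : (modelCov B ω)ᵀ = modelCov B ω := by
  rw [modelCov_eq B ω σ hσ]
  simp [Matrix.transpose_mul, Matrix.mul_assoc, Matrix.diagonal_transpose]

lemma modelCov_mul_one_sub (hσ : Consistent B σ) :
    modelCov B ω * (1 - B) = (1 - B.transpose)⁻¹ * Matrix.diagonal ω := by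
  rw [modelCov, Matrix.mul_assoc, inv_mul_one_sub B σ hσ, Matrix.mul_one]

lemma transpose_inv_entry (hσ : Consistent B σ) {a b : Fin p} (h : σ.symm a ≤ σ.symm b) :
    (1 - B.transpose)⁻¹ a b = if a = b then 1 else 0 := by
  have h1 : (1 - B.transpose) = (1 - B)ᵀ := by
    rw [Matrix.transpose_sub, Matrix.transpose_one]
  rw [h1, ← Matrix.transpose_nonsing_inv, Matrix.transpose_apply, inv_entry B σ hσ h]
  simp [eq_comm]

/-- Covariance of `X_a` with `ε_j` vanishes for `a` preceding `j`. -/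
lemma cov_pred (hσ : Consistent B σ) {a j : Fin p} (h : σ.symm a < σ.symm j) :
    modelCov B ω a j = ∑ i, modelCov B ω a i * B i j := by
  have key : (modelCov B ω * (1 - B)) a j = 0 := by
    rw [modelCov_mul_one_sub B ω σ hσ, Matrix.mul_apply]
    rw [Finset.sum_eq_zero]
    intro i _
    rcases eq_or_ne i j with rfl | hij
    · rw [transpose_inv_entry B σ hσ h.le, if_neg (by rintro rfl; exact lt_irrefl _ h)]
      ring
    · simp [Matrix.diagonal_apply_ne _ hij]
  rw [Matrix.mul_apply] at key
  have : ∑ i, modelCov B ω a i * ((1:Matrix (Fin p) (Fin p) ℝ) i j - B i j) = 0 := by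
    simpa [Matrix.sub_apply] using key
  have h2 : ∑ i, modelCov B ω a i * (1:Matrix (Fin p) (Fin p) ℝ) i j
      = ∑ i, modelCov B ω a i * B i j := by
    rw [← sub_eq_zero, ← Finset.sum_sub_distrib]
    simpa [mul_sub] using this
  calc modelCov B ω a j
      = ∑ i, modelCov B ω a i * (1:Matrix (Fin p) (Fin p) ℝ) i j := by
        rw [Finset.sum_eq_single j] <;> simp +contextual [Matrix.one_apply]
    _ = ∑ i, modelCov B ω a i * B i j := h2

/-- Variance decomposition at `j`. -/
lemma var_decomp (hσ : Consistent B σ) (j : Fin p) :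
    modelCov B ω j j = (∑ i, modelCov B ω j i * B i j) + ω j := by
  have key : (modelCov B ω * (1 - B)) j j = ω j := by
    rw [modelCov_mul_one_sub B ω σ hσ, Matrix.mul_apply]
    rw [Finset.sum_eq_single j]
    · rw [transpose_inv_entry B σ hσ le_rfl, if_pos rfl]
      simp
    · intro i _ hij
      simp [Matrix.diagonal_apply_ne _ hij]
    · simp
  rw [Matrix.mul_apply] at key
  have h1 : ∑ i, modelCov B ω j i * ((1:Matrix (Fin p) (Fin p) ℝ) i j - B i j)
      = modelCov B ω j j - ∑ i, modelCov B ω j i * B i j := by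
    simp only [mul_sub, Finset.sum_sub_distrib]
    congr 1
    rw [Finset.sum_eq_single j] <;> simp +contextual [Matrix.one_apply]
  have : modelCov B ω j j - ∑ i, modelCov B ω j i * B i j = ω j := by
    rw [← h1]; simpa [Matrix.sub_apply] using key
  linarith

end Cov



section Main

variable {p : ℕ}

/-- Sum over a subtype against the extension-by-zero. -/
lemma sum_extend (A : Finset (Fin p)) (g : Fin p → ℝ) (x : ↥A → ℝ) :
    (∑ s : ↥A, g s.1 * x s)
      = ∑ k, g k * (if h : k ∈ A then x ⟨k, h⟩ else 0) := by
  rw [← Finset.sum_subset (Finset.subset_univ A)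
    (by intro k _ hk; rw [dif_neg hk, mul_zero])]
  rw [← Finset.sum_coe_sort A (fun k => g k * (if h : k ∈ A then x ⟨k, h⟩ else 0))]
  refine Finset.sum_congr rfl fun s _ => ?_
  rw [dif_pos s.2]

lemma quad_pos (B : Matrix (Fin p) (Fin p) ℝ) (ω : Fin p → ℝ) (hω : ∀ j, 0 < ω j)
    (σ : Equiv.Perm (Fin p)) (hσ : Consistent B σ) (x : Fin p → ℝ) (hx : x ≠ 0) :
    0 < x ⬝ᵥ (modelCov B ω *ᵥ x) := by
  set D := (1 - B)⁻¹ with hD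
  have hy : D *ᵥ x ≠ 0 := by
    intro h
    apply hx
    have : ((1 - B) * D) *ᵥ x = (1 - B) *ᵥ (D *ᵥ x) := by
      rw [← Matrix.mulVec_mulVec]
    rw [one_sub_mul_inv B σ hσ, Matrix.one_mulVec, h, Matrix.mulVec_zero] at this
    exact this
  have hrw : modelCov B ω *ᵥ x = Dᵀ *ᵥ (Matrix.diagonal ω *ᵥ (D *ᵥ x)) := by
    rw [modelCov_eq B ω σ hσ, ← hD, Matrix.mulVec_mulVec, Matrix.mulVec_mulVec]
  rw [hrw, Matrix.dotProduct_mulVec, Matrix.vecMul_transpose]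
  have := (Matrix.PosDef.diagonal hω).dotProduct_mulVec_pos hy
  simpa using this

lemma subInv_mul (S : Matrix (Fin p) (Fin p) ℝ) (hsym : Sᵀ = S)
    (hpos : ∀ x : Fin p → ℝ, x ≠ 0 → 0 < x ⬝ᵥ (S *ᵥ x)) (A : Finset (Fin p)) :
    (Matrix.of fun a b : ↥A => S a.1 b.1)⁻¹ * (Matrix.of fun a b : ↥A => S a.1 b.1) = 1 := by
  set T := Matrix.of fun a b : ↥A => S a.1 b.1 with hT
  have hTpd : T.PosDef := by
    refine Matrix.PosDef.of_dotProduct_mulVec_pos ?_ ?_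
    · ext a b
      simp only [Matrix.conjTranspose_apply, hT, Matrix.of_apply, star_trivial]
      conv_lhs => rw [← hsym]
      rfl
    · intro x hx
      set x' : Fin p → ℝ := fun i => if h : i ∈ A then x ⟨i, h⟩ else 0 with hx'
      have hx'0 : x' ≠ 0 := by
        intro h0
        apply hx
        funext s
        have := congrFun h0 s.1
        simpa [hx', dif_pos s.2] using this
      have hmv : ∀ s : ↥A, (S *ᵥ x') s.1 = (T *ᵥ x) s := by
        intro s
        rw [Matrix.mulVec, dotProduct, ← sum_extend A (fun k => S s.1 k) x]
        rfl
      have key : x' ⬝ᵥ (S *ᵥ x') = (star x) ⬝ᵥ (T *ᵥ x) := by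
        simp only [star_trivial, dotProduct]
        calc ∑ i, x' i * (S *ᵥ x') i = ∑ i, (S *ᵥ x') i * x' i :=
              Finset.sum_congr rfl fun i _ => mul_comm _ _
          _ = ∑ s : ↥A, (S *ᵥ x') s.1 * x s := (sum_extend A (fun k => (S *ᵥ x') k) x).symm
          _ = ∑ s : ↥A, x s * (T *ᵥ x) s :=
              Finset.sum_congr rfl fun s _ => by rw [hmv s, mul_comm]
      rw [← key]
      exact hpos x' hx'0
  have hdet : IsUnit T.det := isUnit_iff_ne_zero.mpr hTpd.det_pos.ne'
  exact Matrix.nonsing_inv_mul T hdet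

lemma condVar_eq_omega (B : Matrix (Fin p) (Fin p) ℝ) (ω : Fin p → ℝ)
    (hω : ∀ j, 0 < ω j) (σ : Equiv.Perm (Fin p)) (hσ : Consistent B σ) (j : Fin p)
    (A : Finset (Fin p)) (h1 : ∀ i, B i j ≠ 0 → i ∈ A)
    (h2 : ∀ a ∈ A, σ.symm a < σ.symm j) :
    condVar (modelCov B ω) j A = ω j := by
  set S := modelCov B ω with hS
  set T := Matrix.of fun a b : ↥A => S a.1 b.1 with hT
  have hsym : Sᵀ = S := modelCov_symm B ω σ hσ
  have hTinv : T⁻¹ * T = 1 :=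
    subInv_mul S hsym (fun x hx => quad_pos B ω hω σ hσ x hx) A
  set β : ↥A → ℝ := fun s => B s.1 j with hβ
  have hv : ∀ s : ↥A, (T *ᵥ β) s = S s.1 j := by
    intro s
    have hext : (T *ᵥ β) s = ∑ k, S s.1 k * (if h : k ∈ A then B k j else 0) := by
      rw [Matrix.mulVec, dotProduct]
      exact sum_extend A (fun k => S s.1 k) β
    rw [hext]
    have : ∀ k, (if h : k ∈ A then B k j else (0:ℝ)) = B k j := by
      intro k
      by_cases hk : k ∈ A
      · rw [dif_pos hk]
      · rw [dif_neg hk]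
        by_contra h
        exact hk (h1 k (fun h0 => h h0.symm))
    rw [Finset.sum_congr rfl fun k _ => by rw [this k]]
    exact (cov_pred B ω σ hσ (h2 s.1 s.2)).symm
  have hinner : ∀ s : ↥A, ∑ t : ↥A, T⁻¹ s t * S t.1 j = β s := by
    intro s
    have : ∑ t : ↥A, T⁻¹ s t * S t.1 j = (T⁻¹ *ᵥ (T *ᵥ β)) s := by
      rw [Matrix.mulVec, dotProduct]
      exact Finset.sum_congr rfl fun t _ => by rw [hv t]
    rw [this, Matrix.mulVec_mulVec, hTinv, Matrix.one_mulVec]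
  have hmain : ∑ s : ↥A, ∑ t : ↥A, S j s.1 * T⁻¹ s t * S t.1 j
      = ∑ s : ↥A, S j s.1 * B s.1 j := by
    refine Finset.sum_congr rfl fun s _ => ?_
    calc ∑ t : ↥A, S j s.1 * T⁻¹ s t * S t.1 j
        = S j s.1 * ∑ t : ↥A, T⁻¹ s t * S t.1 j := by
          rw [Finset.mul_sum]
          exact Finset.sum_congr rfl fun t _ => by ring
      _ = S j s.1 * B s.1 j := by rw [hinner s]
  have hfull : ∑ s : ↥A, S j s.1 * B s.1 j = ∑ i, S j i * B i j := by
    rw [sum_extend A (fun k => S j k) (fun s => B s.1 j)]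
    refine Finset.sum_congr rfl fun k _ => ?_
    by_cases hk : k ∈ A
    · rw [dif_pos hk]
    · rw [dif_neg hk]
      by_contra h
      exact hk (h1 k (fun h0 => h (by rw [h0, mul_zero])))
  simp only [condVar]
  rw [← hT, hmain, hfull, hS, var_decomp B ω σ hσ j]
  ring

end Main

/-- If `σ` is consistent with the true DAG `G*`, then for every node `j` the conditional
variance of `X_j` given all its predecessors under `σ` equals the conditional variance of
`X_j` given its parents in `G*`. -/
theorem stmt12 {p : ℕ} (B : Matrix (Fin p) (Fin p) ℝ) (ω : Fin p → ℝ)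
    (hω : ∀ j, 0 < ω j)
    (σ : Equiv.Perm (Fin p)) (hσ : Consistent B σ) (j : Fin p) :
    condVar (modelCov B ω) j (PRED σ j) = condVar (modelCov B ω) j (PA B j) := by
  rw [condVar_eq_omega B ω hω σ hσ j (PRED σ j)
      (fun i hi => Finset.mem_filter.mpr ⟨Finset.mem_univ i, hσ i j hi⟩)
      (fun a ha => (Finset.mem_filter.mp ha).2),
    condVar_eq_omega B ω hω σ hσ j (PA B j)
      (fun i hi => Finset.mem_filter.mpr ⟨Finset.mem_univ i, hi⟩)
      (fun a ha => hσ a j (Finset.mem_filter.mp ha).2)]
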